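/- (Single-step simulation.) Let M be a PTIME TM with tape alphabet Γ and input alphabet Σ, together with an encoding as in the simulation setup. Then there exists a term SIMULATE of ForNo such that for every state σ and configuration c with σ ≈ c: (a) if c is a halting configuration (its state is q_HALT), then ⟨SIMULATE, σ⟩ ⇓ τ for some τ with τ ≈ c; and (b) if c ⇝ c' for some configuration c', then ⟨SIMULATE, σ⟩ ⇓ τ for some τ with τ ≈ c'. -/

import Mathlib

set_option linter.unusedVariables false

namespace ForNo

/-- Registers. -/
abbrev Reg := ℕ
/-- Stacks of natural numbers; the head is the top. -/
abbrev Stack := List ℕ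
/-- Stores map registers to stacks. -/
abbrev Store := Reg → Stack
/-- A state is a store together with an error counter. -/
abbrev FState := Store × ℕ

/-- The store mapping every register to the empty stack. -/
def emptyStore : Store := fun _ => []

/-- Store update. -/
def upd (φ : Store) (x : Reg) (s : Stack) : Store := fun y => if y = x then s else φ y

/-- Counter-guarded push operation. -/
def pushOp (n : ℕ) : Stack × ℕ → Stack × ℕ
  | (s, 0) => (n :: s, 0)
  | (s, c + 1) => if s.head? = some n then (s, c + 1) else (s, c)

/-- Counter-guarded pop operation. -/
def popOp (n : ℕ) : Stack × ℕ → Stack × ℕ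
  | (s, c) =>
      if s.head? = some n then
        match c with
        | 0 => (s.tail, 0)
        | c + 1 => (s, c + 1)
      else (s, c + 1)

mutual
  /-- Terms of the (raw) language. -/
  inductive Term : Type where
    | skip : Term
    | push : ℕ → Reg → Term
    | pop : ℕ → Reg → Term
    | seq : Term → Term → Term
    | ifeq : Reg → ℕ → Term → Term
    | normal : List Reg → Term → Term
    | fort : Reg → Bodies → Term
    | roft : Reg → Bodies → Term
  /-- Nonempty lists of iteration bodies. -/
  inductive Bodies : Type where
    | single : Term → Bodies
    | cons : Term → Bodies → Bodies
end

/-- `ps.get i` is `P_min(i,m)` where `ps = P₀ … P_m`. -/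
def Bodies.get : Bodies → ℕ → Term
  | .single t, _ => t
  | .cons t _, 0 => t
  | .cons _ ps, i + 1 => ps.get i

mutual
  /-- Big-step operational semantics `⟨T, ω⟩ ⇓ ω'`. -/
  inductive Eval : Term → FState → FState → Prop where
    | skip : ∀ ω, Eval .skip ω ω
    | seq : ∀ {t u : Term} {ω ω' ω'' : FState},
        Eval t ω ω' → Eval u ω' ω'' → Eval (.seq t u) ω ω''
    | push : ∀ (n : ℕ) (x : Reg) (φ : Store) (c : ℕ),
        Eval (.push n x) (φ, c) (upd φ x (pushOp n (φ x, c)).1, (pushOp n (φ x, c)).2)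
    | pop : ∀ (n : ℕ) (x : Reg) (φ : Store) (c : ℕ),
        Eval (.pop n x) (φ, c) (upd φ x (popOp n (φ x, c)).1, (popOp n (φ x, c)).2)
    | ifeq_true : ∀ {x n t} {φ : Store} {c : ℕ} {ω' : FState},
        (φ x).head? = some n → Eval t (φ, c) ω' → Eval (.ifeq x n t) (φ, c) ω'
    | ifeq_false : ∀ {x n t} (φ : Store) (c : ℕ),
        (φ x).head? ≠ some n → Eval (.ifeq x n t) (φ, c) (φ, c)
    | normal : ∀ {xs t ω ω'}, Eval t ω ω' → Eval (.normal xs t) ω ω'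
    | fort : ∀ {x ps ω ω'}, EvalList (ω.1 x) ps ω ω' → Eval (.fort x ps) ω ω'
    | roft : ∀ {x ps ω ω'}, EvalList (ω.1 x).reverse ps ω ω' → Eval (.roft x ps) ω ω'
  /-- Iteration judgment `⟦s, ps, ω⟧ ⇓ ω'`. -/
  inductive EvalList : Stack → Bodies → FState → FState → Prop where
    | nil : ∀ (ps : Bodies) (ω : FState), EvalList [] ps ω ω
    | cons : ∀ {i : ℕ} {t : Stack} {ps : Bodies} {ω ω'' ω' : FState},
        Eval (ps.get i) ω ω'' → EvalList t ps ω'' ω' → EvalList (i :: t) ps ω ω'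
end

mutual
  /-- The inversion map `−(·)` on terms. -/
  def Term.inv : Term → Term
    | .skip => .skip
    | .push n x => .pop n x
    | .pop n x => .push n x
    | .seq t u => .seq u.inv t.inv
    | .ifeq x n t => .ifeq x n t.inv
    | .normal xs t => .normal xs t.inv
    | .fort x ps => .roft x ps.inv
    | .roft x ps => .fort x ps.inv
  def Bodies.inv : Bodies → Bodies
    | .single t => .single t.inv
    | .cons t ps => .cons t.inv ps.inv
end

mutual
  /-- `t.Writes y` holds iff some `PUSH`/`POP` occurring in `t` writes register `y`. -/
  def Term.Writes : Term → Reg → Prop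
    | .skip, _ => False
    | .push _ x, y => x = y
    | .pop _ x, y => x = y
    | .seq t u, y => t.Writes y ∨ u.Writes y
    | .ifeq _ _ t, y => t.Writes y
    | .normal _ t, y => t.Writes y
    | .fort _ ps, y => ps.Writes y
    | .roft _ ps, y => ps.Writes y
  def Bodies.Writes : Bodies → Reg → Prop
    | .single t, y => t.Writes y
    | .cons t ps, y => t.Writes y ∨ ps.Writes y
end

mutual
  /-- `t.Leads y` holds iff `y` leads some `FOR`/`ROF` iteration occurring in `t`. -/
  def Term.Leads : Term → Reg → Prop
    | .skip, _ => False
    | .push _ _, _ => False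
    | .pop _ _, _ => False
    | .seq t u, y => t.Leads y ∨ u.Leads y
    | .ifeq _ _ t, y => t.Leads y
    | .normal _ t, y => t.Leads y
    | .fort x ps, y => x = y ∨ ps.Leads y
    | .roft x ps, y => x = y ∨ ps.Leads y
  def Bodies.Leads : Bodies → Reg → Prop
    | .single t, y => t.Leads y
    | .cons t ps, y => t.Leads y ∨ ps.Leads y
end

mutual
  /-- `t.Mentions y` holds iff register `y` occurs in `t`. -/
  def Term.Mentions : Term → Reg → Prop
    | .skip, _ => False
    | .push _ x, y => x = y
    | .pop _ x, y => x = y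
    | .seq t u, y => t.Mentions y ∨ u.Mentions y
    | .ifeq x _ t, y => x = y ∨ t.Mentions y
    | .normal xs t, y => y ∈ xs ∨ t.Mentions y
    | .fort x ps, y => x = y ∨ ps.Mentions y
    | .roft x ps, y => x = y ∨ ps.Mentions y
  def Bodies.Mentions : Bodies → Reg → Prop
    | .single t, y => t.Mentions y
    | .cons t ps, y => t.Mentions y ∨ ps.Mentions y
end

mutual
  /-- The finite set of registers occurring in a term. -/
  def Term.regs : Term → Finset Reg
    | .skip => ∅
    | .push _ x => {x}
    | .pop _ x => {x}
    | .seq t u => t.regs ∪ u.regs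
    | .ifeq x _ t => insert x t.regs
    | .normal xs t => xs.toFinset ∪ t.regs
    | .fort x ps => insert x ps.regs
    | .roft x ps => insert x ps.regs
  def Bodies.regs : Bodies → Finset Reg
    | .single t => t.regs
    | .cons t ps => t.regs ∪ ps.regs
end

mutual
  /-- Safe terms: generated by the grammar `S` (no `NORMAL`). -/
  def Term.Safe : Term → Prop
    | .skip => True
    | .push _ _ => True
    | .pop _ _ => True
    | .seq t u => t.Safe ∧ u.Safe
    | .ifeq _ _ t => t.Safe
    | .normal _ _ => False
    | .fort _ ps => ps.Safe
    | .roft _ ps => ps.Safe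
  def Bodies.Safe : Bodies → Prop
    | .single t => t.Safe
    | .cons t ps => t.Safe ∧ ps.Safe
end

/-- Raw terms: generated by the grammar `T` (iterations only inside `NORMAL` bodies,
which must be safe). -/
def Term.Raw : Term → Prop
  | .skip => True
  | .push _ _ => True
  | .pop _ _ => True
  | .seq t u => t.Raw ∧ u.Raw
  | .ifeq _ _ t => t.Raw
  | .normal _ t => t.Safe
  | .fort _ _ => False
  | .roft _ _ => False

mutual
  /-- The read-only constraints (i) and (ii) defining membership in ForNo. -/
  def Term.WF : Term → Prop
    | .skip => True
    | .push _ _ => True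
    | .pop _ _ => True
    | .seq t u => t.WF ∧ u.WF
    | .ifeq x _ t => t.WF ∧ ¬ t.Writes x
    | .normal xs t => t.WF ∧ (∀ x ∈ xs, ¬ t.Writes x) ∧ (∀ y, t.Leads y → y ∈ xs)
    | .fort x ps => ps.WF ∧ ¬ ps.Writes x
    | .roft x ps => ps.WF ∧ ¬ ps.Writes x
  def Bodies.WF : Bodies → Prop
    | .single t => t.WF
    | .cons t ps => t.WF ∧ ps.WF
end

/-- A raw term is in ForNo if it satisfies the read-only constraints. -/
def InForNo (t : Term) : Prop := t.Raw ∧ t.WF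

/-- `iterSeq t k` is the `k`-fold sequential composition `t;…;t` (`SKIP` for `k = 0`). -/
def iterSeq (t : Term) : ℕ → Term
  | 0 => .skip
  | 1 => t
  | n + 2 => .seq t (iterSeq t (n + 1))

/-- `mkBodiesAux g i k` is the list of bodies `g i, g (i+1), …, g (i+k)`. -/
def mkBodiesAux (g : ℕ → Term) : ℕ → ℕ → Bodies
  | i, 0 => .single (g i)
  | i, k + 1 => .cons (g i) (mkBodiesAux g (i + 1) k)

/-- `mkBodies g k` is the list of bodies `g 0, g 1, …, g k`. -/
def mkBodies (g : ℕ → Term) (k : ℕ) : Bodies := mkBodiesAux g 0 k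

/-- `COPY(x,y)` with bodies `PUSH[0] y, …, PUSH[k] y`. -/
def COPY (x y : Reg) (k : ℕ) : Term :=
  .normal [x] (.roft x (mkBodies (fun i => .push i y) k))

/-- `n` nested `FOR rgt` iterations around `PUSH[1] p`. -/
def powNest (rgt p : Reg) : ℕ → Term
  | 0 => .push 1 p
  | n + 1 => .fort rgt (.single (powNest rgt p n))

/-- The term `POW^n`. -/
def POW (rgt p : Reg) (n : ℕ) : Term := .normal [rgt] (powNest rgt p n)

/-- The term `REMOVE-BLANKS` for tape alphabet codes `{0,…,n−1}` and
input alphabet codes `{0,…,m−1}`. -/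
def REMOVEBLANKS (rgt g1 : Reg) (n m : ℕ) : Term :=
  .seq (.normal [rgt] (.roft rgt (mkBodies (fun i => .push i g1) (n - 1))))
       (.normal [g1]
         (.seq (.fort g1 (mkBodies (fun i => .pop i rgt) (n - 1)))
               (.roft g1 (mkBodies (fun i => if i < m then .push i rgt else .skip) m))))

mutual
  /-- Big-step semantics instrumented with the number of rule applications
  in the derivation. -/
  inductive EvalN : ℕ → Term → FState → FState → Prop where
    | skip : ∀ ω, EvalN 1 .skip ω ω
    | seq : ∀ {k l : ℕ} {t u : Term} {ω ω' ω'' : FState},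
        EvalN k t ω ω' → EvalN l u ω' ω'' → EvalN (k + l + 1) (.seq t u) ω ω''
    | push : ∀ (n : ℕ) (x : Reg) (φ : Store) (c : ℕ),
        EvalN 1 (.push n x) (φ, c) (upd φ x (pushOp n (φ x, c)).1, (pushOp n (φ x, c)).2)
    | pop : ∀ (n : ℕ) (x : Reg) (φ : Store) (c : ℕ),
        EvalN 1 (.pop n x) (φ, c) (upd φ x (popOp n (φ x, c)).1, (popOp n (φ x, c)).2)
    | ifeq_true : ∀ {k x n t} {φ : Store} {c : ℕ} {ω' : FState},
        (φ x).head? = some n → EvalN k t (φ, c) ω' → EvalN (k + 1) (.ifeq x n t) (φ, c) ω'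
    | ifeq_false : ∀ {x n t} (φ : Store) (c : ℕ),
        (φ x).head? ≠ some n → EvalN 1 (.ifeq x n t) (φ, c) (φ, c)
    | normal : ∀ {k xs t ω ω'}, EvalN k t ω ω' → EvalN (k + 1) (.normal xs t) ω ω'
    | fort : ∀ {k x ps ω ω'}, EvalListN k (ω.1 x) ps ω ω' → EvalN (k + 1) (.fort x ps) ω ω'
    | roft : ∀ {k x ps ω ω'}, EvalListN k (ω.1 x).reverse ps ω ω' → EvalN (k + 1) (.roft x ps) ω ω'
  inductive EvalListN : ℕ → Stack → Bodies → FState → FState → Prop where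
    | nil : ∀ (ps : Bodies) (ω : FState), EvalListN 1 [] ps ω ω
    | cons : ∀ {k l : ℕ} {i : ℕ} {t : Stack} {ps : Bodies} {ω ω'' ω' : FState},
        EvalN k (ps.get i) ω ω'' → EvalListN l t ps ω'' ω' →
        EvalListN (k + l + 1) (i :: t) ps ω ω'
end

/-! ### Turing machines -/

/-- Deterministic one-tape Turing machines with a semi-infinite tape, input/output
alphabet `S` embedded in the tape alphabet `Γ`, and direction `Bool`
(`false` = left, `true` = right). -/
structure TM (S : Type) where
  Q : Type
  finQ : Fintype Q
  q0 : Q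
  qhalt : Q
  Γ : Type
  finΓ : Fintype Γ
  decΓ : DecidableEq Γ
  blank : Γ
  embed : S → Γ
  embed_inj : Function.Injective embed
  blank_notin : ∀ a, embed a ≠ blank
  δ : Q → Γ → Q × Γ × Bool

namespace TM

variable {S : Type}

/-- Configurations `(u, q, v)`: left tape part (nearest cell first), current state,
right tape part starting with the scanned cell (no trailing blanks). -/
abbrev Config (M : TM S) : Type := List M.Γ × M.Q × List M.Γ

/-- Remove the trailing blanks of a list. -/
def trim (M : TM S) (l : List M.Γ) : List M.Γ :=
  letI := M.decΓ
  (l.reverse.dropWhile (fun a => decide (a = M.blank))).reverse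

/-- The single-step transition function. -/
def stepFn (M : TM S) (c : M.Config) : M.Config :=
  let u := c.1
  let q := c.2.1
  let v := c.2.2
  let a := v.headD M.blank
  let r := M.δ q a
  if r.2.2 then (r.2.1 :: u, r.1, v.tail)
  else (u.tail, r.1, M.trim (u.headD M.blank :: r.2.1 :: v.tail))

/-- Single-step transition relation `c ⇝ c'`. -/
def Step (M : TM S) (c c' : M.Config) : Prop := c.2.1 ≠ M.qhalt ∧ c' = M.stepFn c

/-- `n`-step transition relation `c ⇝ⁿ c'`. -/
def Steps (M : TM S) : ℕ → M.Config → M.Config → Prop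
  | 0 => fun c c' => c = c'
  | n + 1 => fun c c'' => ∃ c', M.Step c c' ∧ M.Steps n c' c''

/-- The initial configuration on input `w`. -/
def init (M : TM S) (w : List S) : M.Config := ([], M.q0, w.map M.embed)

/-- `M` is a polynomial-time Turing machine. -/
def PTime (M : TM S) : Prop :=
  ∃ a b : ℕ, 0 < a ∧ 0 < b ∧ ∀ w : List S,
    ∃ k ≤ a * w.length ^ b, ∃ c : M.Config, M.Steps k (M.init w) c ∧ c.2.1 = M.qhalt

end TM

/-- `f` is computable in polynomial time. -/
def FPTime {S : Type} (f : List S → List S) : Prop :=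
  ∃ M : TM S, M.PTime ∧
    ∀ w : List S, ∃ k : ℕ, M.Steps k (M.init w) ([], M.qhalt, (f w).map M.embed)

/-- `f` is honest: the input length is polynomially bounded in the output length. -/
def Honest {S : Type} (f : List S → List S) : Prop :=
  ∃ q : Polynomial ℕ, ∀ x : List S, x.length ≤ q.eval (f x).length

/-! ### Encodings and computed functions -/

/-- An encoding of a finite alphabet `S`: a bijection onto `{0, …, |S| − 1}`. -/
structure Encoding (S : Type) [Fintype S] where
  enc : S → ℕ
  inj : Function.Injective enc
  lt : ∀ a, enc a < Fintype.card S

/-- Encoding of strings as stacks. -/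
def Encoding.encStr {S : Type} [Fintype S] (e : Encoding S) (w : List S) : Stack :=
  w.map e.enc

/-- `T` (with input register `rin` and output register `rout`) computes `f`. -/
def Computes {S : Type} [Fintype S] (e : Encoding S) (T : Term) (rin rout : Reg)
    (f : List S → List S) : Prop :=
  ∀ x : List S, ∃ φ : Store,
    Eval T (upd emptyStore rin (e.encStr x), 0) (φ, 0) ∧ φ rout = e.encStr (f x)

/-- `T` computes `f` with zero-garbage. -/
def ComputesZG {S : Type} [Fintype S] (e : Encoding S) (T : Term) (rin rout : Reg)
    (f : List S → List S) : Prop :=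
  ∀ x : List S, ∃ φ : Store,
    Eval T (upd emptyStore rin (e.encStr x), 0) (φ, 0) ∧ φ rout = e.encStr (f x) ∧
    ∀ y : Reg, y ≠ rout → φ y = []

/-! ### Simulation of Turing machines -/

/-- The register holding the left part of the tape. -/
def lftR : Reg := 0
/-- The register holding the current state. -/
def qR : Reg := 1
/-- The register holding the right part of the tape. -/
def rgtR : Reg := 2

/-- `σ` simulates configuration `c` (written `σ ≈ c`). -/
def Sim {S : Type} (M : TM S) (encΓ : M.Γ → ℕ) (encQ : M.Q → ℕ)
    (σ : FState) (c : M.Config) : Prop :=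
  σ.2 = 0 ∧
  σ.1 lftR = c.1.map encΓ ∧
  (σ.1 qR).head? = some (encQ c.2.1) ∧
  ∃ bs : Stack, (∀ b ∈ bs, b = encΓ M.blank) ∧ σ.1 rgtR = c.2.2.map encΓ ++ bs

/-- `σ` cleanly simulates configuration `c` (written `σ ≅ c`). -/
def SimClean {S : Type} (M : TM S) (encΓ : M.Γ → ℕ) (encQ : M.Q → ℕ)
    (σ : FState) (c : M.Config) : Prop :=
  σ.2 = 0 ∧
  σ.1 lftR = c.1.map encΓ ∧
  (σ.1 qR).head? = some (encQ c.2.1) ∧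
  σ.1 rgtR = c.2.2.map encΓ

/-- The hypotheses of the simulation setup: `encΓ` is a bijection of `Γ` onto
`{0,…,n−1}` giving non-input characters larger codes than input characters,
and `encQ` is an injective encoding of states. -/
def SimSetup {S : Type} (M : TM S) (encΓ : M.Γ → ℕ) (encQ : M.Q → ℕ) : Prop :=
  Function.Injective encΓ ∧
  (∀ a : M.Γ, encΓ a < @Fintype.card M.Γ M.finΓ) ∧
  (∀ a : M.Γ, (∀ s : S, M.embed s ≠ a) → ∀ s : S, encΓ (M.embed s) < encΓ a) ∧
  Function.Injective encQ



/-! ### Auxiliary executable semantics for loop-free terms -/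

def exec : Term → FState → Option FState
  | .skip, ω => some ω
  | .push n x, (φ, c) => some (upd φ x (pushOp n (φ x, c)).1, (pushOp n (φ x, c)).2)
  | .pop n x, (φ, c) => some (upd φ x (popOp n (φ x, c)).1, (popOp n (φ x, c)).2)
  | .seq t u, ω => (exec t ω).bind (exec u)
  | .ifeq x n t, (φ, c) => if (φ x).head? = some n then exec t (φ, c) else some (φ, c)
  | .normal _ t, ω => exec t ω
  | .fort _ _, _ => none
  | .roft _ _, _ => none

theorem exec_sound : ∀ (t : Term) (ω ω' : FState), exec t ω = some ω' → Eval t ω ω'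
  | .skip, ω, ω', h => by
      simp only [exec, Option.some.injEq] at h; exact h ▸ Eval.skip ω
  | .push n x, (φ, c), ω', h => by
      simp only [exec, Option.some.injEq] at h; exact h ▸ Eval.push n x φ c
  | .pop n x, (φ, c), ω', h => by
      simp only [exec, Option.some.injEq] at h; exact h ▸ Eval.pop n x φ c
  | .seq t u, ω, ω', h => by
      simp only [exec, Option.bind_eq_some_iff] at h
      obtain ⟨ω'', h1, h2⟩ := h
      exact Eval.seq (exec_sound t ω ω'' h1) (exec_sound u ω'' ω' h2)
  | .ifeq x n t, (φ, c), ω', h => by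
      by_cases hc : (φ x).head? = some n
      · simp only [exec, hc, if_true] at h
        exact Eval.ifeq_true hc (exec_sound t (φ, c) ω' h)
      · simp only [exec, hc, if_false, Option.some.injEq] at h
        exact h ▸ Eval.ifeq_false φ c hc
  | .normal xs t, ω, ω', h => Eval.normal (exec_sound t ω ω' (by simpa [exec] using h))
  | .fort _ _, ω, ω', h => by simp [exec] at h
  | .roft _ _, ω, ω', h => by simp [exec] at h

/-! ### Sequencing lists of terms -/

def bigSeq : List Term → Term
  | [] => .skip
  | t :: l => .seq t (bigSeq l)

@[simp] theorem exec_bigSeq_nil (ω : FState) : exec (bigSeq []) ω = some ω := rfl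

theorem exec_bigSeq_cons (t : Term) (L : List Term) (ω : FState) :
    exec (bigSeq (t :: L)) ω = (exec t ω).bind (exec (bigSeq L)) := rfl

theorem exec_cons {t : Term} {L : List Term} {ω ω' : FState}
    (h : exec t ω = some ω') :
    exec (bigSeq (t :: L)) ω = exec (bigSeq L) ω' := by
  rw [exec_bigSeq_cons, h]; rfl

/-! ### Phase lemmas -/

theorem phase_none {α : Type*} {L : List α} {g : α → Term} {ω : FState}
    (h : ∀ a ∈ L, exec (g a) ω = some ω) :
    exec (bigSeq (L.map g)) ω = some ω := by
  induction L with
  | nil => rfl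
  | cons b L ih =>
      rw [List.map_cons, exec_cons (h b (List.mem_cons_self))]
      exact ih fun a ha => h a (List.mem_cons_of_mem _ ha)

theorem phase_one {α : Type*} {L : List α} (hnd : L.Nodup) {a0 : α} (ha0 : a0 ∈ L)
    {g : α → Term} {ω ω' : FState}
    (hfire : exec (g a0) ω = some ω')
    (hpre : ∀ a ∈ L, a ≠ a0 → exec (g a) ω = some ω)
    (hpost : ∀ a ∈ L, a ≠ a0 → exec (g a) ω' = some ω') :
    exec (bigSeq (L.map g)) ω = some ω' := by
  induction L with
  | nil => cases ha0
  | cons b L ih =>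
      rcases List.mem_cons.mp ha0 with rfl | ha0'
      · rw [List.map_cons, exec_cons hfire]
        refine phase_none fun a ha => hpost a (List.mem_cons_of_mem _ ha) ?_
        rintro rfl; exact (List.nodup_cons.mp hnd).1 ha
      · have hb : b ≠ a0 := by rintro rfl; exact (List.nodup_cons.mp hnd).1 ha0'
        rw [List.map_cons, exec_cons (hpre b (List.mem_cons_self) hb)]
        exact ih (List.nodup_cons.mp hnd).2 ha0'
          (fun a ha => hpre a (List.mem_cons_of_mem _ ha))
          (fun a ha => hpost a (List.mem_cons_of_mem _ ha))


/-! ### The SIMULATE term -/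

structure SimRule where
  qc : ℕ
  ac : ℕ
  sc : ℕ
  q'c : ℕ
  bc : ℕ
  dir : Bool

def transT (r : SimRule) : Term :=
  .seq (.pop r.ac 2) (.seq (.push r.q'c 1)
    (if r.dir then .push r.bc 0 else .seq (.push r.bc 2) (.push 1 4)))

def DT (H : ℕ) (r : SimRule) : Term :=
  if r.qc = H then .skip else .ifeq 1 r.qc (.ifeq 2 r.ac (.push r.sc 3))

def ET (H : ℕ) (r : SimRule) : Term :=
  if r.qc = H then .skip else .ifeq 3 r.sc (transT r)

def SIMt (H bC : ℕ) (ΓC : List ℕ) (rules : List SimRule) : Term :=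
  bigSeq
    [ .push 0 3
    , bigSeq (ΓC.map fun a => .ifeq 2 a (.push 1 3))
    , .ifeq 3 0 (.push bC 2)
    , .push 0 4
    , .push 0 5
    , bigSeq (rules.map (DT H))
    , bigSeq (rules.map (ET H))
    , .ifeq 4 1 (.push 1 5)
    , bigSeq (ΓC.map fun g => .ifeq 4 1 (.ifeq 0 g (.push (g + 2) 5)))
    , .ifeq 5 1 (.push bC 2)
    , bigSeq (ΓC.map fun g => .ifeq 5 (g + 2) (.seq (.pop g 0) (.push g 2))) ]

/-! ### Well-formedness -/

theorem bigSeq_raw {L : List Term} (h : ∀ t ∈ L, t.Raw) : (bigSeq L).Raw := by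
  induction L with
  | nil => trivial
  | cons t L ih =>
      exact ⟨h t (List.mem_cons_self), ih fun u hu => h u (List.mem_cons_of_mem _ hu)⟩

theorem bigSeq_wf {L : List Term} (h : ∀ t ∈ L, t.WF) : (bigSeq L).WF := by
  induction L with
  | nil => trivial
  | cons t L ih =>
      exact ⟨h t (List.mem_cons_self), ih fun u hu => h u (List.mem_cons_of_mem _ hu)⟩

theorem SIMt_InForNo (H bC : ℕ) (ΓC : List ℕ) (rules : List SimRule) :
    InForNo (SIMt H bC ΓC rules) := by
  constructor
  · refine bigSeq_raw ?_
    simp only [SIMt, List.mem_cons, List.not_mem_nil, or_false]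
    rintro t (rfl|rfl|rfl|rfl|rfl|rfl|rfl|rfl|rfl|rfl|rfl)
    · trivial
    · refine bigSeq_raw ?_
      intro t ht
      obtain ⟨a, -, rfl⟩ := List.mem_map.mp ht
      trivial
    · trivial
    · trivial
    · trivial
    · refine bigSeq_raw ?_
      intro t ht
      obtain ⟨r, -, rfl⟩ := List.mem_map.mp ht
      unfold DT; split <;> trivial
    · refine bigSeq_raw ?_
      intro t ht
      obtain ⟨r, -, rfl⟩ := List.mem_map.mp ht
      unfold ET transT; split
      · trivial
      · show (_ : Term).Raw ∧ _
        split <;> simp [Term.Raw]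
    · trivial
    · refine bigSeq_raw ?_
      intro t ht
      obtain ⟨a, -, rfl⟩ := List.mem_map.mp ht
      trivial
    · trivial
    · refine bigSeq_raw ?_
      intro t ht
      obtain ⟨a, -, rfl⟩ := List.mem_map.mp ht
      exact ⟨trivial, trivial⟩
  · refine bigSeq_wf ?_
    simp only [SIMt, List.mem_cons, List.not_mem_nil, or_false]
    rintro t (rfl|rfl|rfl|rfl|rfl|rfl|rfl|rfl|rfl|rfl|rfl)
    · trivial
    · refine bigSeq_wf ?_
      intro t ht
      obtain ⟨a, -, rfl⟩ := List.mem_map.mp ht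
      exact ⟨trivial, by simp [Term.Writes]⟩
    · exact ⟨trivial, by simp [Term.Writes]⟩
    · trivial
    · trivial
    · refine bigSeq_wf ?_
      intro t ht
      obtain ⟨r, -, rfl⟩ := List.mem_map.mp ht
      unfold DT; split
      · trivial
      · exact ⟨⟨trivial, by simp [Term.Writes]⟩, by simp [Term.Writes]⟩
    · refine bigSeq_wf ?_
      intro t ht
      obtain ⟨r, -, rfl⟩ := List.mem_map.mp ht
      unfold ET transT; split
      · trivial
      · constructor
        · show (_ : Term).WF ∧ _
          constructor
          · trivial
          · constructor
            · trivial
            · split <;> trivial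
        · show ¬ Term.Writes _ 3
          simp only [Term.Writes]
          split <;> simp [Term.Writes]
    · exact ⟨trivial, by simp [Term.Writes]⟩
    · refine bigSeq_wf ?_
      intro t ht
      obtain ⟨a, -, rfl⟩ := List.mem_map.mp ht
      exact ⟨⟨trivial, by simp [Term.Writes]⟩, by simp [Term.Writes]⟩
    · exact ⟨trivial, by simp [Term.Writes]⟩
    · refine bigSeq_wf ?_
      intro t ht
      obtain ⟨a, -, rfl⟩ := List.mem_map.mp ht
      exact ⟨⟨trivial, trivial⟩, by simp [Term.Writes]⟩

/-! ### Trailing blanks -/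

theorem dropWhile_rev_spec {β : Type} [DecidableEq β] (bl : β) (l : List β) :
    ∃ k, l = (l.reverse.dropWhile (fun a => decide (a = bl))).reverse ++
      List.replicate k bl := by
  refine ⟨(l.reverse.takeWhile (fun a => decide (a = bl))).length, ?_⟩
  have h1 : l.reverse.takeWhile (fun a => decide (a = bl)) =
      List.replicate (l.reverse.takeWhile (fun a => decide (a = bl))).length bl :=
    List.eq_replicate_of_mem (fun b hb => by simpa using List.mem_takeWhile_imp hb)
  calc l = l.reverse.reverse := (List.reverse_reverse l).symm
    _ = (l.reverse.takeWhile (fun a => decide (a = bl)) ++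
          l.reverse.dropWhile (fun a => decide (a = bl))).reverse := by
        rw [List.takeWhile_append_dropWhile]
    _ = _ := by
        rw [List.reverse_append]
        congr 1
        conv_lhs => rw [h1]
        rw [List.reverse_replicate]

theorem TM.trim_spec {S : Type} (M : TM S) (l : List M.Γ) :
    ∃ k, l = M.trim l ++ List.replicate k M.blank := by
  obtain ⟨k, hk⟩ := @dropWhile_rev_spec _ M.decΓ M.blank l
  exact ⟨k, by rw [TM.trim]; exact hk⟩

def mkRule {S : Type} (M : TM S) (encΓ : M.Γ → ℕ) (encQ : M.Q → ℕ)
    (p : M.Q × M.Γ) : SimRule :=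
  ⟨encQ p.1, encΓ p.2, Nat.pair (encQ p.1) (encΓ p.2) + 2,
   encQ (M.δ p.1 p.2).1, encΓ (M.δ p.1 p.2).2.1, (M.δ p.1 p.2).2.2⟩

theorem exec_ifeq_neg {x n : ℕ} {t : Term} {φ : Store} (h : (φ x).head? ≠ some n) :
    exec (.ifeq x n t) (φ, 0) = some (φ, 0) := by
  simp only [exec]; rw [if_neg h]

theorem exec_ifeq_pos {x n : ℕ} {t : Term} {φ : Store} {ω : Option FState}
    (h : (φ x).head? = some n) (h2 : exec t (φ, 0) = ω) :
    exec (.ifeq x n t) (φ, 0) = ω := by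
  simp only [exec]; rw [if_pos h]; exact h2

theorem trim_sim {S : Type} (M : TM S) (encΓ : M.Γ → ℕ) (l : List M.Γ) (bs₂ : Stack)
    (hbs₂ : ∀ b ∈ bs₂, b = encΓ M.blank) :
    ∃ bs₃ : Stack, (∀ b ∈ bs₃, b = encΓ M.blank) ∧
      l.map encΓ ++ bs₂ = (M.trim l).map encΓ ++ bs₃ := by
  obtain ⟨k, hk⟩ := TM.trim_spec M l
  refine ⟨List.replicate k (encΓ M.blank) ++ bs₂, ?_, ?_⟩
  · intro b hb
    rcases List.mem_append.mp hb with hb | hb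
    · exact List.eq_of_mem_replicate hb
    · exact hbs₂ b hb
  · conv_lhs => rw [hk]
    rw [List.map_append, List.map_replicate, List.append_assoc]
end ForNo
open ForNo in
/-- Single-step simulation: there is a ForNo term `SIMULATE`
mapping any state simulating `c` to a state simulating `c` (if `c` is halting)
resp. `c'` (if `c ⇝ c'`). -/
theorem simulate_single_step {S : Type} [Fintype S] (M : TM S) (hM : M.PTime)
    (encΓ : M.Γ → ℕ) (encQ : M.Q → ℕ) (hsetup : SimSetup M encΓ encQ) :
    ∃ SIMULATE : Term, InForNo SIMULATE ∧
      ∀ (σ : FState) (c : M.Config), Sim M encΓ encQ σ c →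
        ((c.2.1 = M.qhalt →
            ∃ τ : FState, Eval SIMULATE σ τ ∧ Sim M encΓ encQ τ c) ∧
         (∀ c' : M.Config, M.Step c c' →
            ∃ τ : FState, Eval SIMULATE σ τ ∧ Sim M encΓ encQ τ c')) := by
  classical
  obtain ⟨hΓinj, -, -, hQinj⟩ := hsetup
  letI := M.finΓ
  letI := M.finQ
  refine ⟨SIMt (encQ M.qhalt) (encΓ M.blank)
      (((Finset.univ : Finset M.Γ).toList).map encΓ)
      (((Finset.univ : Finset (M.Q × M.Γ)).toList).map (mkRule M encΓ encQ)),
    SIMt_InForNo _ _ _ _, ?_⟩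
  rintro ⟨φ, cnt⟩ ⟨u, q, v⟩ ⟨hc0, h0, h1, bs, hbs, h2⟩
  obtain rfl : cnt = 0 := hc0
  have h0' : φ 0 = u.map encΓ := h0
  have h1' : (φ 1).head? = some (encQ q) := h1
  have h2' : φ 2 = v.map encΓ ++ bs := h2
  have hΓnd : ((Finset.univ : Finset M.Γ).toList).Nodup := Finset.nodup_toList _
  have hQΓnd : ((Finset.univ : Finset (M.Q × M.Γ)).toList).Nodup := Finset.nodup_toList _
  have hdec : (φ 2 = [] ∧ v = []) ∨
      ∃ bs₂ : Stack, (∀ b ∈ bs₂, b = encΓ M.blank) ∧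
        φ 2 = encΓ (v.headD M.blank) :: (v.tail.map encΓ ++ bs₂) := by
    cases v with
    | nil =>
        cases bs with
        | nil => exact Or.inl ⟨by simp [h2'], rfl⟩
        | cons b bs' =>
            refine Or.inr ⟨bs', fun x hx => hbs x (List.mem_cons_of_mem _ hx), ?_⟩
            have hb : b = encΓ M.blank := hbs b (List.mem_cons_self)
            simp [h2', hb]
    | cons a v' => exact Or.inr ⟨bs, hbs, by simp [h2']⟩
  have hmid : ∃ (φ5 : Store) (bs₂ : Stack),
      exec (SIMt (encQ M.qhalt) (encΓ M.blank)
          (((Finset.univ : Finset M.Γ).toList).map encΓ)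
          (((Finset.univ : Finset (M.Q × M.Γ)).toList).map (mkRule M encΓ encQ))) (φ, 0)
        = exec (bigSeq
          [ bigSeq (((((Finset.univ : Finset (M.Q × M.Γ)).toList).map (mkRule M encΓ encQ))).map (DT (encQ M.qhalt)))
          , bigSeq (((((Finset.univ : Finset (M.Q × M.Γ)).toList).map (mkRule M encΓ encQ))).map (ET (encQ M.qhalt)))
          , .ifeq 4 1 (.push 1 5)
          , bigSeq (((((Finset.univ : Finset M.Γ).toList).map encΓ)).map fun g => .ifeq 4 1 (.ifeq 0 g (.push (g + 2) 5)))
          , .ifeq 5 1 (.push (encΓ M.blank) 2)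
          , bigSeq (((((Finset.univ : Finset M.Γ).toList).map encΓ)).map fun g => .ifeq 5 (g + 2) (.seq (.pop g 0) (.push g 2))) ]) (φ5, 0)
      ∧ φ5 0 = φ 0 ∧ φ5 1 = φ 1
      ∧ φ5 2 = encΓ (v.headD M.blank) :: (v.tail.map encΓ ++ bs₂)
      ∧ (∀ b ∈ bs₂, b = encΓ M.blank)
      ∧ ((φ5 3).head? = some 0 ∨ (φ5 3).head? = some 1)
      ∧ (φ5 4).head? = some 0 ∧ (φ5 5).head? = some 0 := by
    have e1 : exec (Term.push 0 3) (φ, 0) = some (upd φ 3 (0 :: φ 3), 0) := by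
      simp [exec, pushOp]
    rcases hdec with ⟨hre, rfl⟩ | ⟨bs₂, hbs₂, hsplit⟩
    · have e2 : exec (bigSeq (((((Finset.univ : Finset M.Γ).toList).map encΓ)).map
          fun a => Term.ifeq 2 a (.push 1 3))) (upd φ 3 (0 :: φ 3), 0)
          = some (upd φ 3 (0 :: φ 3), 0) := by
        rw [List.map_map]
        refine phase_none fun a _ => ?_
        have hn : ((upd φ 3 (0 :: φ 3)) 2).head? = none := by simp [upd, hre]
        simp [exec, hn]
      have e3 : exec (Term.ifeq 3 0 (.push (encΓ M.blank) 2)) (upd φ 3 (0 :: φ 3), 0)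
          = some (upd (upd φ 3 (0 :: φ 3)) 2 [encΓ M.blank], 0) := by
        have h3 : ((upd φ 3 (0 :: φ 3)) 3).head? = some 0 := by simp [upd]
        have h2e : (upd φ 3 (0 :: φ 3)) 2 = [] := by simp [upd, hre]
        simp [exec, h3, pushOp, h2e]
      have e4 : exec (Term.push 0 4) (upd (upd φ 3 (0 :: φ 3)) 2 [encΓ M.blank], 0)
          = some (upd (upd (upd φ 3 (0 :: φ 3)) 2 [encΓ M.blank]) 4 (0 :: φ 4), 0) := by
        simp [exec, pushOp, upd]
      have e5 : exec (Term.push 0 5)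
          (upd (upd (upd φ 3 (0 :: φ 3)) 2 [encΓ M.blank]) 4 (0 :: φ 4), 0)
          = some (upd (upd (upd (upd φ 3 (0 :: φ 3)) 2 [encΓ M.blank]) 4 (0 :: φ 4)) 5
              (0 :: φ 5), 0) := by
        simp [exec, pushOp, upd]
      refine ⟨upd (upd (upd (upd φ 3 (0 :: φ 3)) 2 [encΓ M.blank]) 4 (0 :: φ 4)) 5 (0 :: φ 5),
        [], ?_, by simp [upd], by simp [upd], by simp [upd], by simp, by simp [upd],
        by simp [upd], by simp [upd]⟩
      simp only [SIMt]
      rw [exec_cons e1, exec_cons e2, exec_cons e3, exec_cons e4, exec_cons e5]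
    · have e2 : exec (bigSeq (((((Finset.univ : Finset M.Γ).toList).map encΓ)).map
          fun a => Term.ifeq 2 a (.push 1 3))) (upd φ 3 (0 :: φ 3), 0)
          = some (upd (upd φ 3 (0 :: φ 3)) 3 (1 :: 0 :: φ 3), 0) := by
        rw [List.map_map]
        have hhd : ((upd φ 3 (0 :: φ 3)) 2).head? = some (encΓ (v.headD M.blank)) := by
          simp [upd, hsplit]
        refine phase_one hΓnd (Finset.mem_toList.mpr (Finset.mem_univ (v.headD M.blank)))
          ?_ ?_ ?_
        · show exec (Term.ifeq 2 (encΓ (v.headD M.blank)) (.push 1 3)) (upd φ 3 (0 :: φ 3), 0)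
            = _
          simp only [exec]
          rw [if_pos hhd]
          simp [pushOp, upd]
        · intro a _ hne
          have hx : encΓ (v.headD M.blank) ≠ encΓ a := fun h => hne (hΓinj h).symm
          show exec (Term.ifeq 2 (encΓ a) (.push 1 3)) (upd φ 3 (0 :: φ 3), 0) = _
          simp only [exec]
          rw [if_neg (by rw [hhd]; exact fun hc => hx (Option.some.inj hc))]
        · intro a _ hne
          have hhd2 : ((upd (upd φ 3 (0 :: φ 3)) 3 (1 :: 0 :: φ 3)) 2).head?
              = some (encΓ (v.headD M.blank)) := by simp [upd, hsplit]
          have hx : encΓ (v.headD M.blank) ≠ encΓ a := fun h => hne (hΓinj h).symm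
          show exec (Term.ifeq 2 (encΓ a) (.push 1 3))
            (upd (upd φ 3 (0 :: φ 3)) 3 (1 :: 0 :: φ 3), 0) = _
          simp only [exec]
          rw [if_neg (by rw [hhd2]; exact fun hc => hx (Option.some.inj hc))]
      have e3 : exec (Term.ifeq 3 0 (.push (encΓ M.blank) 2))
          (upd (upd φ 3 (0 :: φ 3)) 3 (1 :: 0 :: φ 3), 0)
          = some (upd (upd φ 3 (0 :: φ 3)) 3 (1 :: 0 :: φ 3), 0) := by
        have h3 : ((upd (upd φ 3 (0 :: φ 3)) 3 (1 :: 0 :: φ 3)) 3).head? = some 1 := by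
          simp [upd]
        simp [exec, h3]
      have e4 : exec (Term.push 0 4) (upd (upd φ 3 (0 :: φ 3)) 3 (1 :: 0 :: φ 3), 0)
          = some (upd (upd (upd φ 3 (0 :: φ 3)) 3 (1 :: 0 :: φ 3)) 4 (0 :: φ 4), 0) := by
        simp [exec, pushOp, upd]
      have e5 : exec (Term.push 0 5)
          (upd (upd (upd φ 3 (0 :: φ 3)) 3 (1 :: 0 :: φ 3)) 4 (0 :: φ 4), 0)
          = some (upd (upd (upd (upd φ 3 (0 :: φ 3)) 3 (1 :: 0 :: φ 3)) 4 (0 :: φ 4)) 5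
              (0 :: φ 5), 0) := by
        simp [exec, pushOp, upd]
      refine ⟨upd (upd (upd (upd φ 3 (0 :: φ 3)) 3 (1 :: 0 :: φ 3)) 4 (0 :: φ 4)) 5 (0 :: φ 5),
        bs₂, ?_, by simp [upd], by simp [upd], by simp [upd, hsplit], hbs₂,
        by simp [upd], by simp [upd], by simp [upd]⟩
      simp only [SIMt]
      rw [exec_cons e1, exec_cons e2, exec_cons e3, exec_cons e4, exec_cons e5]
  obtain ⟨φ5, bs₂, hrun, g0, g1, g2, hbs₂, g3, g4, g5⟩ := hmid
  constructor
  · -- halting case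
    rintro rfl
    have e6 : exec (bigSeq (((((Finset.univ : Finset (M.Q × M.Γ)).toList).map
        (mkRule M encΓ encQ))).map (DT (encQ M.qhalt)))) (φ5, 0) = some (φ5, 0) := by
      rw [List.map_map]
      refine phase_none fun p _ => ?_
      simp only [Function.comp_apply, DT]
      split
      · rfl
      · rename_i hne
        have hx : (φ5 1).head? ≠ some (encQ p.1) := by
          rw [g1, h1']
          simp only [ne_eq, Option.some.injEq]
          exact fun h => hne h.symm
        simp [exec, hx, mkRule]
    have e7 : exec (bigSeq (((((Finset.univ : Finset (M.Q × M.Γ)).toList).map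
        (mkRule M encΓ encQ))).map (ET (encQ M.qhalt)))) (φ5, 0) = some (φ5, 0) := by
      rw [List.map_map]
      refine phase_none fun p _ => ?_
      simp only [Function.comp_apply, ET]
      split
      · rfl
      · have hx : (φ5 3).head? ≠ some (Nat.pair (encQ p.1) (encΓ p.2) + 2) := by
          intro hc
          rcases g3 with h | h <;> rw [h] at hc <;>
            simp only [Option.some.injEq] at hc <;> omega
        simp [exec, hx, mkRule]
    have e8 : exec (Term.ifeq 4 1 (.push 1 5)) (φ5, 0) = some (φ5, 0) := by
      simp [exec, g4]
    have e9 : exec (bigSeq (((((Finset.univ : Finset M.Γ).toList).map encΓ)).map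
        fun g => Term.ifeq 4 1 (.ifeq 0 g (.push (g + 2) 5)))) (φ5, 0) = some (φ5, 0) := by
      rw [List.map_map]
      refine phase_none fun a _ => ?_
      simp [exec, Function.comp, g4]
    have e10 : exec (Term.ifeq 5 1 (.push (encΓ M.blank) 2)) (φ5, 0) = some (φ5, 0) := by
      simp [exec, g5]
    have e11 : exec (bigSeq (((((Finset.univ : Finset M.Γ).toList).map encΓ)).map
        fun g => Term.ifeq 5 (g + 2) (.seq (.pop g 0) (.push g 2)))) (φ5, 0)
        = some (φ5, 0) := by
      rw [List.map_map]
      refine phase_none fun a _ => ?_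
      have hx : (φ5 5).head? ≠ some (encΓ a + 2) := by
        rw [g5]; intro hc; simp only [Option.some.injEq] at hc; omega
      simp [exec, Function.comp, hx]
    refine ⟨(φ5, 0), exec_sound _ _ _ ?_, ?_⟩
    · rw [hrun, exec_cons e6, exec_cons e7, exec_cons e8, exec_cons e9, exec_cons e10,
        exec_cons e11]
      rfl
    · refine ⟨rfl, ?_, ?_, ?_⟩
      · show φ5 0 = u.map encΓ
        rw [g0, h0']
      · show (φ5 1).head? = some (encQ M.qhalt)
        rw [g1, h1']
      · cases v with
        | nil =>
            refine ⟨encΓ M.blank :: bs₂, ?_, ?_⟩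
            · intro b hb
              rcases List.mem_cons.mp hb with rfl | hb
              · rfl
              · exact hbs₂ _ hb
            · show φ5 2 = _
              simpa using g2
        | cons a v' =>
            refine ⟨bs₂, hbs₂, ?_⟩
            show φ5 2 = _
            simpa using g2
  · -- step case
    rintro c' ⟨hq, rfl⟩
    have hq' : q ≠ M.qhalt := hq
    have hqH : encQ q ≠ encQ M.qhalt := fun h => hq' (hQinj h)
    have hψ1 : (φ5 1).head? = some (encQ q) := by rw [g1, h1']
    have hψ2 : (φ5 2).head? = some (encΓ (v.headD M.blank)) := by rw [g2]; rfl
    have hsc : ∀ p : M.Q × M.Γ, p ≠ (q, v.headD M.blank) →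
        Nat.pair (encQ q) (encΓ (v.headD M.blank)) + 2 ≠
          Nat.pair (encQ p.1) (encΓ p.2) + 2 := by
      intro p hp h
      have h' : Nat.pair (encQ q) (encΓ (v.headD M.blank)) = Nat.pair (encQ p.1) (encΓ p.2) := by
        omega
      have h'' := Nat.pair_eq_pair.mp h'
      exact hp (Prod.ext (hQinj h''.1).symm (hΓinj h''.2).symm)
    have hDid : ∀ (ψ : Store), (ψ 1).head? = some (encQ q) →
        (ψ 2).head? = some (encΓ (v.headD M.blank)) →
        ∀ p : M.Q × M.Γ, p ≠ (q, v.headD M.blank) →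
        exec (DT (encQ M.qhalt) (mkRule M encΓ encQ p)) (ψ, 0) = some (ψ, 0) := by
      intro ψ hx1 hx2 p hp
      simp only [DT]
      split
      · rfl
      · by_cases hp1 : p.1 = q
        · have hp2 : p.2 ≠ v.headD M.blank := fun h => hp (Prod.ext hp1 h)
          have hcond2 : (ψ 2).head? ≠ some (encΓ p.2) := by
            rw [hx2]
            simp only [ne_eq, Option.some.injEq]
            exact fun h => hp2 (hΓinj h).symm
          have hcond1 : (ψ 1).head? = some (encQ p.1) := by rw [hx1, hp1]
          simp [exec, hcond1, hcond2, mkRule]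
        · have hcond1 : (ψ 1).head? ≠ some (encQ p.1) := by
            rw [hx1]
            simp only [ne_eq, Option.some.injEq]
            exact fun h => hp1 (hQinj h).symm
          simp [exec, hcond1, mkRule]
    have hEid : ∀ (ψ : Store),
        (ψ 3).head? = some (Nat.pair (encQ q) (encΓ (v.headD M.blank)) + 2) →
        ∀ p : M.Q × M.Γ, p ≠ (q, v.headD M.blank) →
        exec (ET (encQ M.qhalt) (mkRule M encΓ encQ p)) (ψ, 0) = some (ψ, 0) := by
      intro ψ hx3 p hp
      simp only [ET]
      split
      · rfl
      · have hx : (ψ 3).head? ≠ some (Nat.pair (encQ p.1) (encΓ p.2) + 2) := by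
          rw [hx3]
          simp only [ne_eq, Option.some.injEq]
          exact hsc p hp
        simp [exec, hx, mkRule]
    have e6 : exec (bigSeq (((((Finset.univ : Finset (M.Q × M.Γ)).toList).map
        (mkRule M encΓ encQ))).map (DT (encQ M.qhalt)))) (φ5, 0)
        = some (upd φ5 3
            ((Nat.pair (encQ q) (encΓ (v.headD M.blank)) + 2) :: φ5 3), 0) := by
      rw [List.map_map]
      refine phase_one hQΓnd
        (Finset.mem_toList.mpr (Finset.mem_univ (q, v.headD M.blank)))
        ?_ (fun p _ hp => hDid φ5 hψ1 hψ2 p hp)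
        (fun p _ hp => hDid _ (by simp [upd, hψ1]) (by simp [upd, hψ2]) p hp)
      simp [exec, DT, mkRule, hqH, hψ1, hψ2, pushOp, upd]
    cases hdir : (M.δ q (v.headD M.blank)).2.2 with
    | true =>
      have hψ3' : ((upd φ5 3 ((Nat.pair (encQ q) (encΓ (v.headD M.blank)) + 2) :: φ5 3)) 3).head?
          = some (Nat.pair (encQ q) (encΓ (v.headD M.blank)) + 2) := by simp [upd]
      have e7 : exec (bigSeq (((((Finset.univ : Finset (M.Q × M.Γ)).toList).map
          (mkRule M encΓ encQ))).map (ET (encQ M.qhalt))))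
          (upd φ5 3 ((Nat.pair (encQ q) (encΓ (v.headD M.blank)) + 2) :: φ5 3), 0)
          = some (upd (upd (upd (upd φ5 3
              ((Nat.pair (encQ q) (encΓ (v.headD M.blank)) + 2) :: φ5 3)) 2
              (v.tail.map encΓ ++ bs₂)) 1 (encQ (M.δ q (v.headD M.blank)).1 :: φ5 1)) 0
              (encΓ (M.δ q (v.headD M.blank)).2.1 :: φ5 0), 0) := by
        rw [List.map_map]
        refine phase_one hQΓnd
          (Finset.mem_toList.mpr (Finset.mem_univ (q, v.headD M.blank)))
          ?_ (fun p _ hp => hEid _ hψ3' p hp)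
          (fun p _ hp => hEid _ (by simp [upd]) p hp)
        show exec (ET (encQ M.qhalt) (mkRule M encΓ encQ (q, v.headD M.blank))) _ = _
        simp only [ET, mkRule, transT]
        simp only [hqH, if_false, ↓reduceIte]
        refine exec_ifeq_pos hψ3' ?_
        have hdir' : (M.δ q (v.head?.getD M.blank)).2.2 = true := by simpa using hdir
        simp [exec, popOp, pushOp, upd, g2, hdir']
      have h4t : ((upd (upd (upd (upd φ5 3
          ((Nat.pair (encQ q) (encΓ (v.headD M.blank)) + 2) :: φ5 3)) 2
          (v.tail.map encΓ ++ bs₂)) 1 (encQ (M.δ q (v.headD M.blank)).1 :: φ5 1)) 0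
          (encΓ (M.δ q (v.headD M.blank)).2.1 :: φ5 0)) 4).head? = some 0 := by
        simp [upd, g4]
      have h5t : ((upd (upd (upd (upd φ5 3
          ((Nat.pair (encQ q) (encΓ (v.headD M.blank)) + 2) :: φ5 3)) 2
          (v.tail.map encΓ ++ bs₂)) 1 (encQ (M.δ q (v.headD M.blank)).1 :: φ5 1)) 0
          (encΓ (M.δ q (v.headD M.blank)).2.1 :: φ5 0)) 5).head? = some 0 := by
        simp [upd, g5]
      have hc' : M.stepFn (u, q, v) = ((M.δ q (v.headD M.blank)).2.1 :: u,
          (M.δ q (v.headD M.blank)).1, v.tail) := by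
        have hdir' : (M.δ q (v.head?.getD M.blank)).2.2 = true := by simpa using hdir
        simp [TM.stepFn, hdir']
      refine ⟨(upd (upd (upd (upd φ5 3
          ((Nat.pair (encQ q) (encΓ (v.headD M.blank)) + 2) :: φ5 3)) 2
          (v.tail.map encΓ ++ bs₂)) 1 (encQ (M.δ q (v.headD M.blank)).1 :: φ5 1)) 0
          (encΓ (M.δ q (v.headD M.blank)).2.1 :: φ5 0), 0), exec_sound _ _ _ ?_, ?_⟩
      · rw [hrun, exec_cons e6, exec_cons e7,
          exec_cons (exec_ifeq_neg (by rw [h4t]; simp)),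
          exec_cons (phase_none (L := List.map encΓ Finset.univ.toList)
            (g := fun g => Term.ifeq 4 1 (Term.ifeq 0 g (Term.push (g + 2) 5)))
            fun a _ => exec_ifeq_neg (by rw [h4t]; simp)),
          exec_cons (exec_ifeq_neg (by rw [h5t]; simp)),
          exec_cons (phase_none (L := List.map encΓ Finset.univ.toList)
            (g := fun g => Term.ifeq 5 (g + 2) (Term.seq (Term.pop g 0) (Term.push g 2)))
            fun a _ => exec_ifeq_neg
              (by rw [h5t]; intro hc; simp only [Option.some.injEq] at hc; omega))]
        rfl
      · rw [hc']
        refine ⟨rfl, ?_, ?_, bs₂, hbs₂, ?_⟩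
        · show _ = _
          simp [upd, lftR, g0, h0']
        · show List.head? _ = _
          simp [upd, qR]
        · show _ = _
          simp [upd, rgtR]
    | false =>
      have hdir' : (M.δ q (v.head?.getD M.blank)).2.2 = false := by simpa using hdir
      have hψ3' : ((upd φ5 3 ((Nat.pair (encQ q) (encΓ (v.headD M.blank)) + 2) :: φ5 3)) 3).head?
          = some (Nat.pair (encQ q) (encΓ (v.headD M.blank)) + 2) := by simp [upd]
      have e7 : exec (bigSeq (((((Finset.univ : Finset (M.Q × M.Γ)).toList).map
          (mkRule M encΓ encQ))).map (ET (encQ M.qhalt))))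
          (upd φ5 3 ((Nat.pair (encQ q) (encΓ (v.headD M.blank)) + 2) :: φ5 3), 0)
          = some (upd (upd (upd (upd (upd φ5 3
              ((Nat.pair (encQ q) (encΓ (v.headD M.blank)) + 2) :: φ5 3)) 2
              (v.tail.map encΓ ++ bs₂)) 1 (encQ (M.δ q (v.headD M.blank)).1 :: φ5 1)) 2
              (encΓ (M.δ q (v.headD M.blank)).2.1 :: (v.tail.map encΓ ++ bs₂))) 4
              (1 :: φ5 4), 0) := by
        rw [List.map_map]
        refine phase_one hQΓnd
          (Finset.mem_toList.mpr (Finset.mem_univ (q, v.headD M.blank)))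
          ?_ (fun p _ hp => hEid _ hψ3' p hp)
          (fun p _ hp => hEid _ (by simp [upd]) p hp)
        show exec (ET (encQ M.qhalt) (mkRule M encΓ encQ (q, v.headD M.blank))) _ = _
        simp only [ET, mkRule, transT]
        simp only [hqH, if_false, ↓reduceIte]
        refine exec_ifeq_pos hψ3' ?_
        simp [exec, popOp, pushOp, upd, g2, hdir']
      have h4f : ((upd (upd (upd (upd (upd φ5 3
          ((Nat.pair (encQ q) (encΓ (v.headD M.blank)) + 2) :: φ5 3)) 2
          (v.tail.map encΓ ++ bs₂)) 1 (encQ (M.δ q (v.headD M.blank)).1 :: φ5 1)) 2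
          (encΓ (M.δ q (v.headD M.blank)).2.1 :: (v.tail.map encΓ ++ bs₂))) 4
          (1 :: φ5 4)) 4).head? = some 1 := by simp [upd]
      have e8 : exec (Term.ifeq 4 1 (.push 1 5))
          (upd (upd (upd (upd (upd φ5 3
            ((Nat.pair (encQ q) (encΓ (v.headD M.blank)) + 2) :: φ5 3)) 2
            (v.tail.map encΓ ++ bs₂)) 1 (encQ (M.δ q (v.headD M.blank)).1 :: φ5 1)) 2
            (encΓ (M.δ q (v.headD M.blank)).2.1 :: (v.tail.map encΓ ++ bs₂))) 4
            (1 :: φ5 4), 0)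
          = some (upd (upd (upd (upd (upd (upd φ5 3
            ((Nat.pair (encQ q) (encΓ (v.headD M.blank)) + 2) :: φ5 3)) 2
            (v.tail.map encΓ ++ bs₂)) 1 (encQ (M.δ q (v.headD M.blank)).1 :: φ5 1)) 2
            (encΓ (M.δ q (v.headD M.blank)).2.1 :: (v.tail.map encΓ ++ bs₂))) 4
            (1 :: φ5 4)) 5 (1 :: φ5 5), 0) := by
        refine exec_ifeq_pos h4f ?_
        simp [exec, pushOp, upd]
      -- abbreviate the store after phase 8
      generalize hΦ : upd (upd (upd (upd (upd (upd φ5 3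
          ((Nat.pair (encQ q) (encΓ (v.headD M.blank)) + 2) :: φ5 3)) 2
          (v.tail.map encΓ ++ bs₂)) 1 (encQ (M.δ q (v.headD M.blank)).1 :: φ5 1)) 2
          (encΓ (M.δ q (v.headD M.blank)).2.1 :: (v.tail.map encΓ ++ bs₂))) 4
          (1 :: φ5 4)) 5 (1 :: φ5 5) = Φ at e8
      have hΦ0 : Φ 0 = φ 0 := by rw [← hΦ]; simp [upd, g0]
      have hΦ1 : Φ 1 = encQ (M.δ q (v.headD M.blank)).1 :: φ5 1 := by rw [← hΦ]; simp [upd]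
      have hΦ2 : Φ 2 = encΓ (M.δ q (v.headD M.blank)).2.1 :: (v.tail.map encΓ ++ bs₂) := by
        rw [← hΦ]; simp [upd]
      have hΦ4 : (Φ 4).head? = some 1 := by rw [← hΦ]; simp [upd]
      have hΦ5 : (Φ 5).head? = some 1 := by rw [← hΦ]; simp [upd]
      cases u with
      | nil =>
        have h0n : φ 0 = [] := by simpa using h0'
        have e9 : exec (bigSeq (((((Finset.univ : Finset M.Γ).toList).map encΓ)).map
            fun g => Term.ifeq 4 1 (.ifeq 0 g (.push (g + 2) 5)))) (Φ, 0)
            = some (Φ, 0) := by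
          rw [List.map_map]
          refine phase_none fun a _ => ?_
          show exec (Term.ifeq 4 1 (Term.ifeq 0 (encΓ a) (Term.push (encΓ a + 2) 5))) (Φ, 0) = _
          refine exec_ifeq_pos hΦ4 (exec_ifeq_neg ?_)
          rw [hΦ0, h0n]
          simp
        have e10 : exec (Term.ifeq 5 1 (.push (encΓ M.blank) 2)) (Φ, 0)
            = some (upd Φ 2 (encΓ M.blank :: encΓ (M.δ q (v.headD M.blank)).2.1 ::
                (v.tail.map encΓ ++ bs₂)), 0) := by
          refine exec_ifeq_pos hΦ5 ?_
          simp [exec, pushOp, upd, hΦ2]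
        have e11 : exec (bigSeq (((((Finset.univ : Finset M.Γ).toList).map encΓ)).map
            fun g => Term.ifeq 5 (g + 2) (.seq (.pop g 0) (.push g 2))))
            (upd Φ 2 (encΓ M.blank :: encΓ (M.δ q (v.headD M.blank)).2.1 ::
              (v.tail.map encΓ ++ bs₂)), 0)
            = some (upd Φ 2 (encΓ M.blank :: encΓ (M.δ q (v.headD M.blank)).2.1 ::
              (v.tail.map encΓ ++ bs₂)), 0) := by
          rw [List.map_map]
          refine phase_none fun a _ => ?_
          show exec (Term.ifeq 5 (encΓ a + 2) _) _ = _
          refine exec_ifeq_neg ?_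
          have : ((upd Φ 2 (encΓ M.blank :: encΓ (M.δ q (v.headD M.blank)).2.1 ::
              (v.tail.map encΓ ++ bs₂))) 5).head? = some 1 := by simp [upd, hΦ5]
          rw [this]
          intro hc; simp only [Option.some.injEq] at hc; omega
        have hc' : M.stepFn ([], q, v) = ([], (M.δ q (v.headD M.blank)).1,
            M.trim (M.blank :: (M.δ q (v.headD M.blank)).2.1 :: v.tail)) := by
          simp [TM.stepFn, hdir']
        refine ⟨(upd Φ 2 (encΓ M.blank :: encΓ (M.δ q (v.headD M.blank)).2.1 ::
            (v.tail.map encΓ ++ bs₂)), 0), exec_sound _ _ _ ?_, ?_⟩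
        · rw [hrun, exec_cons e6, exec_cons e7, exec_cons e8, exec_cons e9, exec_cons e10,
            exec_cons e11]
          rfl
        · rw [hc']
          obtain ⟨bs₃, hbs₃, heq⟩ := trim_sim M encΓ
            (M.blank :: (M.δ q (v.headD M.blank)).2.1 :: v.tail) bs₂ hbs₂
          refine ⟨rfl, ?_, ?_, bs₃, hbs₃, ?_⟩
          · show _ = _
            simp [upd, lftR, hΦ0, h0n]
          · show List.head? _ = _
            simp [upd, qR, hΦ1]
          · show _ = _
            rw [← heq]
            simp [upd, rgtR]
      | cons hd u' =>
        have h0c : φ 0 = encΓ hd :: List.map encΓ u' := by simpa using h0'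
        have hΦ0' : (Φ 0).head? = some (encΓ hd) := by rw [hΦ0, h0c]; rfl
        have e9 : exec (bigSeq (((((Finset.univ : Finset M.Γ).toList).map encΓ)).map
            fun g => Term.ifeq 4 1 (.ifeq 0 g (.push (g + 2) 5)))) (Φ, 0)
            = some (upd Φ 5 ((encΓ hd + 2) :: 1 :: φ5 5), 0) := by
          rw [List.map_map]
          refine phase_one hΓnd (Finset.mem_toList.mpr (Finset.mem_univ hd)) ?_ ?_ ?_
          · show exec (Term.ifeq 4 1 (Term.ifeq 0 (encΓ hd) (Term.push (encΓ hd + 2) 5))) (Φ, 0) = _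
            refine exec_ifeq_pos hΦ4 ?_
            have h5v : Φ 5 = 1 :: φ5 5 := by rw [← hΦ]; simp [upd]
            refine exec_ifeq_pos hΦ0' ?_
            simp [exec, pushOp, upd, h5v]
          · intro a _ hne
            show exec (Term.ifeq 4 1 (Term.ifeq 0 (encΓ a) (Term.push (encΓ a + 2) 5))) (Φ, 0) = _
            refine exec_ifeq_pos hΦ4 (exec_ifeq_neg ?_)
            rw [hΦ0']
            exact fun hc => hne (hΓinj (Option.some.inj hc)).symm
          · intro a _ hne
            show exec (Term.ifeq 4 1 (Term.ifeq 0 (encΓ a) (Term.push (encΓ a + 2) 5)))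
              (upd Φ 5 ((encΓ hd + 2) :: 1 :: φ5 5), 0) = _
            refine exec_ifeq_pos (by simp [upd, hΦ4]) (exec_ifeq_neg ?_)
            have : ((upd Φ 5 ((encΓ hd + 2) :: 1 :: φ5 5)) 0).head? = some (encΓ hd) := by
              simp [upd, hΦ0']
            rw [this]
            exact fun hc => hne (hΓinj (Option.some.inj hc)).symm
        have e10 : exec (Term.ifeq 5 1 (.push (encΓ M.blank) 2))
            (upd Φ 5 ((encΓ hd + 2) :: 1 :: φ5 5), 0)
            = some (upd Φ 5 ((encΓ hd + 2) :: 1 :: φ5 5), 0) := by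
          refine exec_ifeq_neg ?_
          have : ((upd Φ 5 ((encΓ hd + 2) :: 1 :: φ5 5)) 5).head? = some (encΓ hd + 2) := by
            simp [upd]
          rw [this]
          intro hc; simp only [Option.some.injEq] at hc; omega
        have e11 : exec (bigSeq (((((Finset.univ : Finset M.Γ).toList).map encΓ)).map
            fun g => Term.ifeq 5 (g + 2) (.seq (.pop g 0) (.push g 2))))
            (upd Φ 5 ((encΓ hd + 2) :: 1 :: φ5 5), 0)
            = some (upd (upd (upd Φ 5 ((encΓ hd + 2) :: 1 :: φ5 5)) 0 (List.map encΓ u')) 2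
                (encΓ hd :: encΓ (M.δ q (v.headD M.blank)).2.1 ::
                  (v.tail.map encΓ ++ bs₂)), 0) := by
          rw [List.map_map]
          have hx5 : ((upd Φ 5 ((encΓ hd + 2) :: 1 :: φ5 5)) 5).head? = some (encΓ hd + 2) := by
            simp [upd]
          refine phase_one hΓnd (Finset.mem_toList.mpr (Finset.mem_univ hd)) ?_ ?_ ?_
          · show exec (Term.ifeq 5 (encΓ hd + 2)
              (Term.seq (Term.pop (encΓ hd) 0) (Term.push (encΓ hd) 2))) _ = _
            refine exec_ifeq_pos hx5 ?_
            simp [exec, popOp, pushOp, upd, hΦ0, h0c, hΦ2]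
          · intro a _ hne
            show exec (Term.ifeq 5 (encΓ a + 2)
              (Term.seq (Term.pop (encΓ a) 0) (Term.push (encΓ a) 2))) _ = _
            refine exec_ifeq_neg ?_
            rw [hx5]
            intro hc
            have h2c := Option.some.inj hc
            exact hne (hΓinj (by omega)).symm
          · intro a _ hne
            show exec (Term.ifeq 5 (encΓ a + 2)
              (Term.seq (Term.pop (encΓ a) 0) (Term.push (encΓ a) 2))) _ = _
            refine exec_ifeq_neg ?_
            have : ((upd (upd (upd Φ 5 ((encΓ hd + 2) :: 1 :: φ5 5)) 0 (List.map encΓ u')) 2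
                (encΓ hd :: encΓ (M.δ q (v.headD M.blank)).2.1 ::
                  (v.tail.map encΓ ++ bs₂))) 5).head? = some (encΓ hd + 2) := by
              simp [upd]
            rw [this]
            intro hc
            have h2c := Option.some.inj hc
            exact hne (hΓinj (by omega)).symm
        have hc' : M.stepFn (hd :: u', q, v) = (u', (M.δ q (v.headD M.blank)).1,
            M.trim (hd :: (M.δ q (v.headD M.blank)).2.1 :: v.tail)) := by
          simp [TM.stepFn, hdir']
        refine ⟨(upd (upd (upd Φ 5 ((encΓ hd + 2) :: 1 :: φ5 5)) 0 (List.map encΓ u')) 2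
            (encΓ hd :: encΓ (M.δ q (v.headD M.blank)).2.1 ::
              (v.tail.map encΓ ++ bs₂)), 0), exec_sound _ _ _ ?_, ?_⟩
        · rw [hrun, exec_cons e6, exec_cons e7, exec_cons e8, exec_cons e9, exec_cons e10,
            exec_cons e11]
          rfl
        · rw [hc']
          obtain ⟨bs₃, hbs₃, heq⟩ := trim_sim M encΓ
            (hd :: (M.δ q (v.headD M.blank)).2.1 :: v.tail) bs₂ hbs₂
          refine ⟨rfl, ?_, ?_, bs₃, hbs₃, ?_⟩
          · show _ = _
            simp [upd, lftR]
          · show List.head? _ = _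
            simp [upd, qR, hΦ1]
          · show _ = _
            rw [← heq]
            simp [upd, rgtR]
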